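/- For every integer n ≥ 1, the ratio Φ⁽ⁿ⁾(x)/Φ⁽ⁿ⁻¹⁾(x) of successive derivatives of Φ tends to 0 as x → -∞ and tends to +∞ as x → +∞. -/

import Mathlib

open MeasureTheory Real Filter

open scoped ENNReal

section Aux
open Set


lemma contOn_kernel (b c : ℝ) :
    ContinuousOn (fun t : ℝ => Real.exp (-(t ^ 2) + c * t) * t ^ b) (Set.Ioi 0) := by
  apply ContinuousOn.mul
  · exact (Continuous.continuousOn (by continuity))
  · exact fun t ht => (Real.continuousAt_rpow_const t b (Or.inl (ne_of_gt ht))).continuousWithinAt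

lemma integrable_kernel (b c : ℝ) (hb : -1 < b) :
    IntegrableOn (fun t : ℝ => Real.exp (-(t ^ 2) + c * t) * t ^ b) (Set.Ioi 0) := by
  have base : IntegrableOn (fun t : ℝ => t ^ b * Real.exp (-(1/2 : ℝ) * t ^ 2)) (Set.Ioi 0) :=
    integrableOn_rpow_mul_exp_neg_mul_sq (by norm_num) hb
  refine ((base.const_mul (Real.exp (c ^ 2 / 2))).mono'
    ((contOn_kernel b c).aestronglyMeasurable measurableSet_Ioi) ?_)
  filter_upwards [ae_restrict_mem measurableSet_Ioi] with t ht
  have ht0 : 0 < t := ht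
  rw [Real.norm_eq_abs, abs_mul, abs_of_pos (Real.exp_pos _),
    abs_of_pos (Real.rpow_pos_of_pos ht0 b)]
  have h1 : -(t ^ 2) + c * t ≤ c ^ 2 / 2 + (-(1/2 : ℝ) * t ^ 2) := by nlinarith [sq_nonneg (t - c)]
  calc Real.exp (-(t ^ 2) + c * t) * t ^ b
      ≤ (Real.exp (c ^ 2 / 2) * Real.exp (-(1/2 : ℝ) * t ^ 2)) * t ^ b := by
        rw [← Real.exp_add]
        exact mul_le_mul_of_nonneg_right (Real.exp_le_exp.2 h1)
          (le_of_lt (Real.rpow_pos_of_pos ht0 b))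
    _ = Real.exp (c ^ 2 / 2) * (t ^ b * Real.exp (-(1/2 : ℝ) * t ^ 2)) := by ring


end Aux

/-- `Fa a x = ∫₀^∞ exp(-t² - 2xt) · t^a dt`, a Hermite-type function of negative degree. -/
noncomputable def Fa (a x : ℝ) : ℝ :=
  ∫ t in Set.Ioi (0 : ℝ), Real.exp (-(t ^ 2) - 2 * x * t) * t ^ a

/-- `Phi β σh δ c x = F_a(u(x))` with `a = δ/β - 1` and `u(x) = (c - βx)/(√β·σ̂)`. -/
noncomputable def Phi (β σh δ c : ℝ) (x : ℝ) : ℝ :=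
  Fa (δ / β - 1) ((c - β * x) / (Real.sqrt β * σh))

section Aux2
open Set

lemma Fa_eq (a x : ℝ) :
    Fa a x = ∫ t in Set.Ioi (0 : ℝ), Real.exp (-(t ^ 2) + (-2 * x) * t) * t ^ a := by
  unfold Fa; congr 1; funext t; ring_nf

lemma integrable_Fa (a x : ℝ) (ha : -1 < a) :
    IntegrableOn (fun t : ℝ => Real.exp (-(t ^ 2) - 2 * x * t) * t ^ a) (Set.Ioi 0) := by
  have := integrable_kernel a (-2 * x) ha
  refine this.congr_fun (fun t _ => ?_) measurableSet_Ioi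
  ring_nf

lemma kernel_pos {b c t : ℝ} (ht : 0 < t) : 0 < Real.exp (-(t ^ 2) + c * t) * t ^ b :=
  mul_pos (Real.exp_pos _) (Real.rpow_pos_of_pos ht b)

lemma integral_Ioc_pos (b c p q : ℝ) (hp : 0 ≤ p) (hpq : p < q) (hb : -1 < b) :
    0 < ∫ t in Set.Ioc p q, Real.exp (-(t ^ 2) + c * t) * t ^ b := by
  have hi : IntegrableOn (fun t : ℝ => Real.exp (-(t ^ 2) + c * t) * t ^ b) (Set.Ioc p q) :=
    (integrable_kernel b c hb).mono_set (fun t ht => lt_of_le_of_lt hp ht.1)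
  rw [← intervalIntegral.integral_of_le hpq.le]
  apply intervalIntegral.intervalIntegral_pos_of_pos_on
  · rwa [intervalIntegrable_iff_integrableOn_Ioc_of_le hpq.le]
  · exact fun t ht => kernel_pos (lt_of_le_of_lt hp ht.1)
  · exact hpq

lemma Fa_pos (a x : ℝ) (ha : -1 < a) : 0 < Fa a x := by
  rw [Fa_eq]
  refine (setIntegral_pos_iff_support_of_nonneg_ae ?_ ?_).2 ?_
  · filter_upwards [ae_restrict_mem measurableSet_Ioi] with t ht
    simpa using (kernel_pos (b := a) (c := -2 * x) ht).le
  · exact integrable_kernel a (-2 * x) ha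
  · have hsub : Set.Ioi (0:ℝ) ⊆
        Function.support (fun t => Real.exp (-(t ^ 2) + (-2 * x) * t) * t ^ a) ∩ Set.Ioi 0 :=
      fun t ht => ⟨ne_of_gt (kernel_pos ht), ht⟩
    calc (0:ℝ≥0∞) < volume (Set.Ioi (0:ℝ)) := by simp
      _ ≤ _ := measure_mono hsub

lemma hasDerivAt_Fa (a : ℝ) (ha : -1 < a) (x : ℝ) :
    HasDerivAt (Fa a) (-2 * Fa (a + 1) x) x := by
  have ha1 : (-1:ℝ) < a + 1 := by linarith
  set c0 : ℝ := 2 * (|x| + 1) with hc0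
  have key := hasDerivAt_integral_of_dominated_loc_of_deriv_le (μ := volume.restrict (Set.Ioi (0:ℝ)))
    (F := fun y t => Real.exp (-(t ^ 2) - 2 * y * t) * t ^ a)
    (F' := fun y t => -2 * (Real.exp (-(t ^ 2) - 2 * y * t) * t ^ (a + 1)))
    (x₀ := x) (bound := fun t => 2 * (Real.exp (-(t ^ 2) + c0 * t) * t ^ (a + 1)))
    (s := Metric.ball x 1) (Metric.ball_mem_nhds x one_pos)
    (Eventually.of_forall fun y =>
      ((contOn_kernel a (-2 * y)).aestronglyMeasurable measurableSet_Ioi).congr ?_)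
    ((integrable_Fa a x ha))
    ((((contOn_kernel (a+1) (-2 * x)).aestronglyMeasurable measurableSet_Ioi).congr ?_).const_mul _)
    ?_ ((integrable_kernel (a+1) c0 ha1).const_mul 2) ?_
  · refine key.2.congr_deriv ?_
    rw [Fa_eq (a+1) x, ← integral_const_mul]
    congr 1; funext t; ring_nf
  · filter_upwards [ae_restrict_mem measurableSet_Ioi] with t ht
    ring_nf
  · filter_upwards [ae_restrict_mem measurableSet_Ioi] with t ht
    ring_nf
  · filter_upwards [ae_restrict_mem measurableSet_Ioi] with t ht
    intro y hy
    have ht0 : (0:ℝ) < t := ht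
    have hyx : |y| ≤ |x| + 1 := by
      have h1 : ‖y - x‖ < 1 := mem_ball_iff_norm.1 hy
      have h2 : |y| - |x| ≤ |y - x| := abs_sub_abs_le_abs_sub y x
      rw [Real.norm_eq_abs] at h1
      linarith
    rw [norm_mul, norm_neg, Real.norm_ofNat, Real.norm_eq_abs,
      abs_of_pos (mul_pos (Real.exp_pos _) (Real.rpow_pos_of_pos ht0 _))]
    have harg : -(t ^ 2) - 2 * y * t ≤ -(t ^ 2) + c0 * t := by
      have h3 : -2 * y * t ≤ 2 * |y| * t := by nlinarith [neg_abs_le y, abs_nonneg y]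
      nlinarith [abs_nonneg y]
    gcongr
  · filter_upwards [ae_restrict_mem measurableSet_Ioi] with t ht
    intro y hy
    have ht0 : (0:ℝ) < t := ht
    have h1 : HasDerivAt (fun z : ℝ => -(t ^ 2) + -2 * t * z) (-2 * t) y := by
      simpa using ((hasDerivAt_id y).const_mul (-2 * t)).const_add (-(t ^ 2))
    have h2 := (h1.exp).mul_const (t ^ a)
    have heq : (fun z : ℝ => Real.exp (-(t ^ 2) + -2 * t * z) * t ^ a)
        = (fun z : ℝ => Real.exp (-(t ^ 2) - 2 * z * t) * t ^ a) := by
      funext z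
      rw [show -(t ^ 2) + -2 * t * z = -(t ^ 2) - 2 * z * t from by ring]
    rw [heq] at h2
    refine h2.congr_deriv ?_
    rw [Real.rpow_add_one (ne_of_gt ht0),
      show -(t ^ 2) - 2 * y * t = -(t ^ 2) + -2 * t * y from by ring]
    ring


-- kernel with c = 0 wrappers
lemma integrable_kernel0 (b : ℝ) (hb : -1 < b) :
    IntegrableOn (fun t : ℝ => Real.exp (-(t ^ 2)) * t ^ b) (Set.Ioi 0) := by
  have := integrable_kernel b 0 hb
  simpa using this

lemma integral0_Ioc_pos (b p q : ℝ) (hp : 0 ≤ p) (hpq : p < q) (hb : -1 < b) :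
    0 < ∫ t in Set.Ioc p q, Real.exp (-(t ^ 2)) * t ^ b := by
  have := integral_Ioc_pos b 0 p q hp hpq hb
  simpa using this

lemma kernel0_pos {b t : ℝ} (ht : 0 < t) : 0 < Real.exp (-(t ^ 2)) * t ^ b :=
  mul_pos (Real.exp_pos _) (Real.rpow_pos_of_pos ht b)

lemma Fa_split (a u p : ℝ) (ha : -1 < a) (hp : 0 < p) :
    Fa a u = (∫ t in Set.Ioc 0 p, Real.exp (-(t ^ 2) - 2 * u * t) * t ^ a)
      + ∫ t in Set.Ioi p, Real.exp (-(t ^ 2) - 2 * u * t) * t ^ a := by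
  rw [show Fa a u = ∫ t in Set.Ioc 0 p ∪ Set.Ioi p, Real.exp (-(t ^ 2) - 2 * u * t) * t ^ a by
    unfold Fa; rw [Set.Ioc_union_Ioi_eq_Ioi hp.le]]
  exact setIntegral_union (Set.Ioc_disjoint_Ioi le_rfl) measurableSet_Ioi
    ((integrable_Fa a u ha).mono_set (fun t ht => lt_of_le_of_lt le_rfl ht.1))
    ((integrable_Fa a u ha).mono_set (fun t ht => lt_trans hp ht))

lemma kernel_nonneg_ae (a u : ℝ) (s : Set ℝ) (hs : MeasurableSet s) (h : s ⊆ Set.Ioi 0) :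
    0 ≤ᵐ[volume.restrict s] (fun t : ℝ => Real.exp (-(t ^ 2) - 2 * u * t) * t ^ a) := by
  filter_upwards [ae_restrict_mem hs] with t ht
  have ht0 : (0:ℝ) < t := h ht
  positivity

lemma ratio_zero (b : ℝ) (hb : -1 < b) :
    Tendsto (fun u => Fa (b + 1) u / Fa b u) atTop (nhds 0) := by
  have hb1 : (-1:ℝ) < b + 1 := by linarith
  rw [tendsto_order]
  constructor
  · intro a ha
    exact Eventually.of_forall fun u =>
      lt_of_lt_of_le ha (div_nonneg (Fa_pos _ u hb1).le (Fa_pos _ u hb).le)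
  · intro ε hε
    set p : ℝ := ε / 2 with hpdef
    have hp : 0 < p := by positivity
    set C : ℝ := ∫ t in Set.Ioi (0:ℝ), Real.exp (-(t ^ 2)) * t ^ (b + 1) with hCdef
    set c1 : ℝ := ∫ t in Set.Ioc (0:ℝ) (p/4), Real.exp (-(t ^ 2)) * t ^ b with hc1def
    have hc1 : 0 < c1 := integral0_Ioc_pos b 0 (p/4) le_rfl (by positivity) hb
    have hexp : Tendsto (fun u : ℝ => Real.exp (u * (p / 2))) atTop atTop :=
      Real.tendsto_exp_atTop.comp (Tendsto.atTop_mul_const (by positivity) tendsto_id)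
    filter_upwards [hexp.eventually_gt_atTop (C / (p * c1)), eventually_ge_atTop 0] with u hu hu0
    rw [div_lt_iff₀ (Fa_pos b u hb)]
    -- notation
    set K1 : ℝ → ℝ := fun t => Real.exp (-(t ^ 2) - 2 * u * t) * t ^ (b + 1) with hK1
    set K0 : ℝ → ℝ := fun t => Real.exp (-(t ^ 2) - 2 * u * t) * t ^ b with hK0
    have hI1 : (∫ t in Set.Ioc 0 p, K1 t) ≤ p * Fa b u := by
      have step1 : (∫ t in Set.Ioc 0 p, K1 t) ≤ ∫ t in Set.Ioc 0 p, p * K0 t := by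
        apply setIntegral_mono_on
        · exact (integrable_Fa (b+1) u hb1).mono_set (fun t ht => ht.1)
        · exact (((integrable_Fa b u hb).mono_set (fun (t:ℝ) ht => ht.1)).const_mul p)
        · exact measurableSet_Ioc
        · intro t ht
          have ht0 : (0:ℝ) < t := ht.1
          rw [hK1, hK0]
          simp only
          rw [Real.rpow_add_one (ne_of_gt ht0)]
          have : Real.exp (-(t ^ 2) - 2 * u * t) * t ^ b * t
              ≤ Real.exp (-(t ^ 2) - 2 * u * t) * t ^ b * p := by
            apply mul_le_mul_of_nonneg_left ht.2
            positivity
          calc Real.exp (-(t ^ 2) - 2 * u * t) * (t ^ b * t)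
              = Real.exp (-(t ^ 2) - 2 * u * t) * t ^ b * t := by ring
            _ ≤ Real.exp (-(t ^ 2) - 2 * u * t) * t ^ b * p := this
            _ = p * (Real.exp (-(t ^ 2) - 2 * u * t) * t ^ b) := by ring
      have step2 : (∫ t in Set.Ioc 0 p, K0 t) ≤ Fa b u := by
        apply setIntegral_mono_set (integrable_Fa b u hb)
          (kernel_nonneg_ae b u _ measurableSet_Ioi (fun t ht => ht))
        exact HasSubset.Subset.eventuallyLE (fun t ht => ht.1)
      calc (∫ t in Set.Ioc 0 p, K1 t) ≤ ∫ t in Set.Ioc 0 p, p * K0 t := step1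
        _ = p * ∫ t in Set.Ioc 0 p, K0 t := by rw [integral_const_mul]
        _ ≤ p * Fa b u := by exact mul_le_mul_of_nonneg_left step2 hp.le
    have hI2 : (∫ t in Set.Ioi p, K1 t) ≤ Real.exp (-(u * p)) * C := by
      have step1 : (∫ t in Set.Ioi p, K1 t)
          ≤ ∫ t in Set.Ioi p, Real.exp (-(u * p)) * (Real.exp (-(t ^ 2)) * t ^ (b + 1)) := by
        apply setIntegral_mono_on
        · exact (integrable_Fa (b+1) u hb1).mono_set (fun t ht => lt_trans hp ht)
        · exact ((integrable_kernel0 (b+1) hb1).mono_set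
            (fun (t:ℝ) ht => lt_trans hp ht)).const_mul _
        · exact measurableSet_Ioi
        · intro t ht
          have htp : p ≤ t := le_of_lt ht
          have ht0 : (0:ℝ) < t := lt_of_lt_of_le hp htp
          rw [hK1]
          simp only
          rw [show Real.exp (-(u * p)) * (Real.exp (-(t ^ 2)) * t ^ (b+1))
            = Real.exp (-(u * p) + -(t ^ 2)) * t ^ (b+1) by rw [Real.exp_add]; ring]
          apply mul_le_mul_of_nonneg_right _ (Real.rpow_pos_of_pos ht0 _).le
          apply Real.exp_le_exp.2
          nlinarith [mul_le_mul_of_nonneg_left htp hu0]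
      have step2 : (∫ t in Set.Ioi p, Real.exp (-(t ^ 2)) * t ^ (b + 1)) ≤ C := by
        apply setIntegral_mono_set (integrable_kernel0 (b+1) hb1)
        · filter_upwards [ae_restrict_mem measurableSet_Ioi] with t ht
          have : (0:ℝ) < t := ht
          positivity
        · exact HasSubset.Subset.eventuallyLE (fun t ht => lt_trans hp ht)
      calc (∫ t in Set.Ioi p, K1 t)
          ≤ ∫ t in Set.Ioi p, Real.exp (-(u * p)) * (Real.exp (-(t ^ 2)) * t ^ (b + 1)) := step1
        _ = Real.exp (-(u * p)) * ∫ t in Set.Ioi p, Real.exp (-(t ^ 2)) * t ^ (b + 1) := by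
            rw [integral_const_mul]
        _ ≤ Real.exp (-(u * p)) * C := mul_le_mul_of_nonneg_left step2 (Real.exp_pos _).le
    have hLow : Real.exp (-(u * (p / 2))) * c1 ≤ Fa b u := by
      have step1 : (∫ t in Set.Ioc (0:ℝ) (p/4),
          Real.exp (-(u * (p / 2))) * (Real.exp (-(t ^ 2)) * t ^ b))
          ≤ ∫ t in Set.Ioc (0:ℝ) (p/4), K0 t := by
        apply setIntegral_mono_on
        · exact ((integrable_kernel0 b hb).mono_set (fun (t:ℝ) ht => ht.1)).const_mul _
        · exact (integrable_Fa b u hb).mono_set (fun t ht => ht.1)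
        · exact measurableSet_Ioc
        · intro t ht
          have ht0 : (0:ℝ) < t := ht.1
          rw [hK0]
          simp only
          rw [show Real.exp (-(u * (p/2))) * (Real.exp (-(t ^ 2)) * t ^ b)
            = Real.exp (-(u * (p/2)) + -(t ^ 2)) * t ^ b by rw [Real.exp_add]; ring]
          apply mul_le_mul_of_nonneg_right _ (Real.rpow_pos_of_pos ht0 _).le
          apply Real.exp_le_exp.2
          nlinarith [mul_le_mul_of_nonneg_left ht.2 hu0]
      have step2 : (∫ t in Set.Ioc (0:ℝ) (p/4), K0 t) ≤ Fa b u := by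
        apply setIntegral_mono_set (integrable_Fa b u hb)
          (kernel_nonneg_ae b u _ measurableSet_Ioi (fun t ht => ht))
        exact HasSubset.Subset.eventuallyLE (fun t ht => ht.1)
      calc Real.exp (-(u * (p / 2))) * c1
          = ∫ t in Set.Ioc (0:ℝ) (p/4),
              Real.exp (-(u * (p / 2))) * (Real.exp (-(t ^ 2)) * t ^ b) := by
            rw [integral_const_mul, hc1def]
        _ ≤ ∫ t in Set.Ioc (0:ℝ) (p/4), K0 t := step1
        _ ≤ Fa b u := step2
    have hsplit := Fa_split (b+1) u p hb1 hp
    rw [← hK1] at hsplit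
    -- from hu : C / (p * c1) < exp (u * (p/2))
    have hCbound : Real.exp (-(u * p)) * C < p * (Real.exp (-(u * (p/2))) * c1) := by
      have h1 : C < p * c1 * Real.exp (u * (p/2)) := by
        rw [div_lt_iff₀ (mul_pos hp hc1)] at hu
        linarith [hu]
      have h2 : Real.exp (-(u * p)) * C
          < Real.exp (-(u * p)) * (p * c1 * Real.exp (u * (p/2))) := by
        exact mul_lt_mul_of_pos_left h1 (Real.exp_pos _)
      calc Real.exp (-(u * p)) * C
          < Real.exp (-(u * p)) * (p * c1 * Real.exp (u * (p/2))) := h2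
        _ = p * (Real.exp (-(u * p) + u * (p/2)) * c1) := by rw [Real.exp_add]; ring
        _ = p * (Real.exp (-(u * (p/2))) * c1) := by
            rw [show -(u * p) + u * (p/2) = -(u * (p/2)) by ring]
    have hεp : ε = p + p := by rw [hpdef]; ring
    have hfinal : Fa (b+1) u < ε * Fa b u := by
      have h3 : Real.exp (-(u * p)) * C < p * Fa b u :=
        lt_of_lt_of_le hCbound (mul_le_mul_of_nonneg_left hLow hp.le)
      rw [hsplit, hεp]
      have := add_lt_add_of_le_of_lt hI1 (lt_of_le_of_lt hI2 h3)
      linarith [this]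
    exact hfinal

lemma ratio_top (b : ℝ) (hb : -1 < b) :
    Tendsto (fun u => Fa (b + 1) u / Fa b u) atBot atTop := by
  have hb1 : (-1:ℝ) < b + 1 := by linarith
  rw [tendsto_atTop]
  intro M
  set T : ℝ := 2 * max M 1 with hTdef
  have hT : 0 < T := by
    have : (1:ℝ) ≤ max M 1 := le_max_right M 1
    linarith
  have hMT : M ≤ T / 2 := by
    have : M ≤ max M 1 := le_max_left M 1
    rw [hTdef]; linarith
  set CT : ℝ := ∫ t in Set.Ioc (0:ℝ) T, Real.exp (-(t ^ 2)) * t ^ b with hCTdef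
  set c2 : ℝ := ∫ t in Set.Ioc (2*T) (2*T+1), Real.exp (-(t ^ 2)) * t ^ b with hc2def
  have hc2 : 0 < c2 := integral0_Ioc_pos b (2*T) (2*T+1) (by linarith) (by linarith) hb
  have hexp : Tendsto (fun u : ℝ => Real.exp (-(2 * T * u))) atBot atTop := by
    have h1 : Tendsto (fun u : ℝ => 2 * T * u) atBot atBot :=
      Tendsto.const_mul_atBot (by positivity) tendsto_id
    have h2 : Tendsto (fun u : ℝ => -(2 * T * u)) atBot atTop := tendsto_neg_atBot_atTop.comp h1
    exact Real.tendsto_exp_atTop.comp h2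
  filter_upwards [hexp.eventually_ge_atTop (2 * CT / c2), eventually_le_atBot 0] with u hu hu0
  rw [le_div_iff₀ (Fa_pos b u hb)]
  set K1 : ℝ → ℝ := fun t => Real.exp (-(t ^ 2) - 2 * u * t) * t ^ (b + 1) with hK1
  set K0 : ℝ → ℝ := fun t => Real.exp (-(t ^ 2) - 2 * u * t) * t ^ b with hK0
  -- upper bound on near part
  have hNear : (∫ t in Set.Ioc 0 T, K0 t) ≤ Real.exp (-(2 * T * u)) * CT := by
    have step1 : (∫ t in Set.Ioc 0 T, K0 t)
        ≤ ∫ t in Set.Ioc (0:ℝ) T, Real.exp (-(2 * T * u)) * (Real.exp (-(t ^ 2)) * t ^ b) := by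
      apply setIntegral_mono_on
      · exact (integrable_Fa b u hb).mono_set (fun t ht => ht.1)
      · exact ((integrable_kernel0 b hb).mono_set (fun (t:ℝ) ht => ht.1)).const_mul _
      · exact measurableSet_Ioc
      · intro t ht
        have ht0 : (0:ℝ) < t := ht.1
        rw [hK0]
        simp only
        rw [show Real.exp (-(2 * T * u)) * (Real.exp (-(t ^ 2)) * t ^ b)
          = Real.exp (-(2 * T * u) + -(t ^ 2)) * t ^ b by rw [Real.exp_add]; ring]
        apply mul_le_mul_of_nonneg_right _ (Real.rpow_pos_of_pos ht0 _).le
        apply Real.exp_le_exp.2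
        nlinarith [mul_le_mul_of_nonneg_left ht.2 (neg_nonneg.2 hu0)]
    calc (∫ t in Set.Ioc 0 T, K0 t)
        ≤ ∫ t in Set.Ioc (0:ℝ) T, Real.exp (-(2 * T * u)) * (Real.exp (-(t ^ 2)) * t ^ b) := step1
      _ = Real.exp (-(2 * T * u)) * CT := by rw [integral_const_mul, hCTdef]
  -- lower bound on Fa b u
  have hLow : Real.exp (-(2 * (2 * T) * u)) * c2 ≤ Fa b u := by
    have step1 : (∫ t in Set.Ioc (2*T) (2*T+1),
        Real.exp (-(2 * (2 * T) * u)) * (Real.exp (-(t ^ 2)) * t ^ b))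
        ≤ ∫ t in Set.Ioc (2*T) (2*T+1), K0 t := by
      apply setIntegral_mono_on
      · exact ((integrable_kernel0 b hb).mono_set
          (fun (t:ℝ) ht => lt_of_le_of_lt (by linarith : (0:ℝ) ≤ 2*T) ht.1)).const_mul _
      · exact (integrable_Fa b u hb).mono_set
          (fun t ht => lt_of_le_of_lt (by linarith : (0:ℝ) ≤ 2*T) ht.1)
      · exact measurableSet_Ioc
      · intro t ht
        have ht0 : (0:ℝ) < t := lt_of_le_of_lt (by linarith : (0:ℝ) ≤ 2*T) ht.1
        rw [hK0]
        simp only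
        rw [show Real.exp (-(2 * (2 * T) * u)) * (Real.exp (-(t ^ 2)) * t ^ b)
          = Real.exp (-(2 * (2 * T) * u) + -(t ^ 2)) * t ^ b by rw [Real.exp_add]; ring]
        apply mul_le_mul_of_nonneg_right _ (Real.rpow_pos_of_pos ht0 _).le
        apply Real.exp_le_exp.2
        nlinarith [mul_le_mul_of_nonneg_left ht.1.le (neg_nonneg.2 hu0)]
    have step2 : (∫ t in Set.Ioc (2*T) (2*T+1), K0 t) ≤ Fa b u := by
      apply setIntegral_mono_set (integrable_Fa b u hb)
        (kernel_nonneg_ae b u _ measurableSet_Ioi (fun t ht => ht))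
      exact HasSubset.Subset.eventuallyLE
        (fun t ht => lt_of_le_of_lt (by linarith : (0:ℝ) ≤ 2*T) ht.1)
    calc Real.exp (-(2 * (2 * T) * u)) * c2
        = ∫ t in Set.Ioc (2*T) (2*T+1),
            Real.exp (-(2 * (2 * T) * u)) * (Real.exp (-(t ^ 2)) * t ^ b) := by
          rw [integral_const_mul, hc2def]
      _ ≤ ∫ t in Set.Ioc (2*T) (2*T+1), K0 t := step1
      _ ≤ Fa b u := step2
  -- near part is at most half of Fa b u
  have hHalf : (∫ t in Set.Ioc 0 T, K0 t) ≤ Fa b u / 2 := by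
    have h1 : 2 * CT ≤ c2 * Real.exp (-(2 * T * u)) := by
      rw [div_le_iff₀ hc2] at hu
      linarith
    have h2 : Real.exp (-(2 * T * u)) * CT
        ≤ Real.exp (-(2 * T * u)) * (c2 * Real.exp (-(2 * T * u)) / 2) := by
      apply mul_le_mul_of_nonneg_left _ (Real.exp_pos _).le
      linarith
    have h3 : Real.exp (-(2 * T * u)) * (c2 * Real.exp (-(2 * T * u)) / 2)
        = Real.exp (-(2 * (2 * T) * u)) * c2 / 2 := by
      rw [show -(2 * (2 * T) * u) = -(2 * T * u) + -(2 * T * u) by ring, Real.exp_add]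
      ring
    calc (∫ t in Set.Ioc 0 T, K0 t) ≤ Real.exp (-(2 * T * u)) * CT := hNear
      _ ≤ Real.exp (-(2 * T * u)) * (c2 * Real.exp (-(2 * T * u)) / 2) := h2
      _ = Real.exp (-(2 * (2 * T) * u)) * c2 / 2 := h3
      _ ≤ Fa b u / 2 := by linarith [hLow]
  have hsplit := Fa_split b u T hb hT
  rw [← hK0] at hsplit
  have hFar : Fa b u / 2 ≤ ∫ t in Set.Ioi T, K0 t := by linarith [hHalf]
  have hK1far : T * (∫ t in Set.Ioi T, K0 t) ≤ ∫ t in Set.Ioi T, K1 t := by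
    rw [← integral_const_mul]
    apply setIntegral_mono_on
    · exact ((integrable_Fa b u hb).mono_set (fun (t:ℝ) ht => lt_trans hT ht)).const_mul _
    · exact (integrable_Fa (b+1) u hb1).mono_set (fun t ht => lt_trans hT ht)
    · exact measurableSet_Ioi
    · intro t ht
      have htT : T ≤ t := le_of_lt ht
      have ht0 : (0:ℝ) < t := lt_of_lt_of_le hT htT
      rw [hK0, hK1]
      simp only
      rw [Real.rpow_add_one (ne_of_gt ht0)]
      have hker : 0 < Real.exp (-(t ^ 2) - 2 * u * t) * t ^ b := by positivity
      calc T * (Real.exp (-(t ^ 2) - 2 * u * t) * t ^ b)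
          = (Real.exp (-(t ^ 2) - 2 * u * t) * t ^ b) * T := by ring
        _ ≤ (Real.exp (-(t ^ 2) - 2 * u * t) * t ^ b) * t :=
            mul_le_mul_of_nonneg_left htT hker.le
        _ = Real.exp (-(t ^ 2) - 2 * u * t) * (t ^ b * t) := by ring
  have hK1whole : (∫ t in Set.Ioi T, K1 t) ≤ Fa (b+1) u := by
    apply setIntegral_mono_set (integrable_Fa (b+1) u hb1)
      (kernel_nonneg_ae (b+1) u _ measurableSet_Ioi (fun t ht => ht))
    exact HasSubset.Subset.eventuallyLE (fun t ht => lt_trans hT ht)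
  calc M * Fa b u ≤ (T / 2) * Fa b u :=
        mul_le_mul_of_nonneg_right hMT (Fa_pos b u hb).le
    _ = T * (Fa b u / 2) := by ring
    _ ≤ T * (∫ t in Set.Ioi T, K0 t) := mul_le_mul_of_nonneg_left hFar hT.le
    _ ≤ ∫ t in Set.Ioi T, K1 t := hK1far
    _ ≤ Fa (b+1) u := hK1whole

end Aux2

section Aux3
open Set

lemma iteratedDeriv_Phi (β σh δ c : ℝ) (hβ : 0 < β) (hσ : 0 < σh) (hδ : 0 < δ) (n : ℕ) :
    iteratedDeriv n (Phi β σh δ c) = fun x =>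
      (2 * β / (Real.sqrt β * σh)) ^ n * Fa (δ / β - 1 + n)
        ((c - β * x) / (Real.sqrt β * σh)) := by
  have hd : 0 < Real.sqrt β * σh := mul_pos (Real.sqrt_pos.2 hβ) hσ
  induction n with
  | zero =>
    funext x
    simp only [iteratedDeriv_zero, pow_zero, one_mul, Nat.cast_zero, add_zero]
    rfl
  | succ n ih =>
    have hbn : (-1:ℝ) < δ / β - 1 + n := by
      have : 0 < δ / β := div_pos hδ hβ
      have : (0:ℝ) ≤ n := Nat.cast_nonneg n
      linarith
    rw [iteratedDeriv_succ, ih]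
    funext x
    have hu : HasDerivAt (fun x : ℝ => (c - β * x) / (Real.sqrt β * σh))
        (-β / (Real.sqrt β * σh)) x := by
      have h1 : HasDerivAt (fun x : ℝ => c - β * x) (-(β * 1)) x :=
        ((hasDerivAt_id x).const_mul β).const_sub c
      simpa using h1.div_const (Real.sqrt β * σh)
    have hF := (hasDerivAt_Fa (δ / β - 1 + n) hbn ((c - β * x) / (Real.sqrt β * σh))).comp x hu
    have hall := (hF.const_mul ((2 * β / (Real.sqrt β * σh)) ^ n)).deriv
    rw [show (fun x => (2 * β / (Real.sqrt β * σh)) ^ n * Fa (δ / β - 1 + n)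
        ((c - β * x) / (Real.sqrt β * σh)))
      = fun x => (2 * β / (Real.sqrt β * σh)) ^ n *
          ((Fa (δ / β - 1 + n)) ∘ (fun x : ℝ => (c - β * x) / (Real.sqrt β * σh))) x from rfl]
    rw [hall]
    push_cast
    rw [show δ / β - 1 + (n + 1 : ℝ) = δ / β - 1 + n + 1 by ring]
    have hne : Real.sqrt β * σh ≠ 0 := ne_of_gt hd
    rw [pow_succ]
    field_simp

end Aux3

/-- For every `n ≥ 1`, the ratio `Φ⁽ⁿ⁾(x)/Φ⁽ⁿ⁻¹⁾(x)` of successive derivatives of `Φ`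
tends to `0` as `x → -∞` and to `+∞` as `x → +∞`. -/
theorem Phi_derivative_ratio_asymptotics (β σh δ c : ℝ)
    (hβ : 0 < β) (hσ : 0 < σh) (hδ : 0 < δ) (n : ℕ) (hn : 1 ≤ n) :
    Tendsto (fun x : ℝ =>
        iteratedDeriv n (Phi β σh δ c) x / iteratedDeriv (n - 1) (Phi β σh δ c) x)
      atBot (nhds 0) ∧
    Tendsto (fun x : ℝ =>
        iteratedDeriv n (Phi β σh δ c) x / iteratedDeriv (n - 1) (Phi β σh δ c) x)
      atTop atTop := by
  obtain ⟨m, rfl⟩ : ∃ m, n = m + 1 := ⟨n - 1, (Nat.succ_pred_eq_of_pos hn).symm⟩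
  have hd : 0 < Real.sqrt β * σh := mul_pos (Real.sqrt_pos.2 hβ) hσ
  obtain ⟨K, hKdef⟩ : ∃ K : ℝ, K = 2 * β / (Real.sqrt β * σh) := ⟨_, rfl⟩
  have hK : 0 < K := by rw [hKdef]; positivity
  obtain ⟨b, hbdef⟩ : ∃ b : ℝ, b = δ / β - 1 + m := ⟨_, rfl⟩
  have hb : (-1:ℝ) < b := by
    have h1 : 0 < δ / β := div_pos hδ hβ
    have h2 : (0:ℝ) ≤ m := Nat.cast_nonneg m
    rw [hbdef]; linarith
  have hfun : (fun x : ℝ =>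
      iteratedDeriv (m+1) (Phi β σh δ c) x / iteratedDeriv (m+1-1) (Phi β σh δ c) x)
      = fun x => K * (Fa (b + 1) ((c - β * x) / (Real.sqrt β * σh))
          / Fa b ((c - β * x) / (Real.sqrt β * σh))) := by
    funext x
    rw [show m + 1 - 1 = m from rfl, iteratedDeriv_Phi β σh δ c hβ hσ hδ (m+1),
      iteratedDeriv_Phi β σh δ c hβ hσ hδ m]
    push_cast
    rw [show δ / β - 1 + ((m:ℝ) + 1) = b + 1 by rw [hbdef]; ring, ← hbdef, ← hKdef, pow_succ]
    have hFb : Fa b ((c - β * x) / (Real.sqrt β * σh)) ≠ 0 :=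
      ne_of_gt (Fa_pos b _ hb)
    have hKm : (K:ℝ) ^ m ≠ 0 := pow_ne_zero m (ne_of_gt hK)
    field_simp
  rw [hfun]
  have hu_bot : Tendsto (fun x : ℝ => (c - β * x) / (Real.sqrt β * σh)) atBot atTop := by
    have h1 : Tendsto (fun x : ℝ => β * x) atBot atBot :=
      Tendsto.const_mul_atBot hβ tendsto_id
    have h2 : Tendsto (fun x : ℝ => c - β * x) atBot atTop := by
      have := tendsto_neg_atBot_atTop.comp h1
      simpa [sub_eq_add_neg] using tendsto_atTop_add_const_left atBot c this
    exact h2.atTop_div_const hd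
  have hu_top : Tendsto (fun x : ℝ => (c - β * x) / (Real.sqrt β * σh)) atTop atBot := by
    have h1 : Tendsto (fun x : ℝ => β * x) atTop atTop :=
      Tendsto.const_mul_atTop hβ tendsto_id
    have h2 : Tendsto (fun x : ℝ => c - β * x) atTop atBot := by
      have := tendsto_neg_atTop_atBot.comp h1
      simpa [sub_eq_add_neg] using tendsto_atBot_add_const_left atTop c this
    exact h2.atBot_div_const hd
  constructor
  · have := ((ratio_zero b hb).comp hu_bot).const_mul K
    simpa [Function.comp] using this
  · have := Tendsto.const_mul_atTop hK ((ratio_top b hb).comp hu_top)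
    simpa [Function.comp] using this
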